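/- Let C : ℝ → ℝ be twice differentiable, nonnegative, with C(0)=0, C'' ≤ b, and monotone on (−∞,0] and on [0,∞). Let F = {f_1 < ⋯ < f_N}, p a probability measure on ℝ, and define M as in the clipping lemma. Then the optimal expected cost restricted to estimates in F exceeds the unrestricted optimal expected cost by at most max_j (b/8)(f_{j+1} − f_j)² + ∫ M(ω) dp(ω): S_C(p,F) − S_C(p,ℝ) ≤ max_j (b/8)(f_{j+1}−f_j)² + ∫ M(ω) p(ω) dω. -/

import Mathlib

open MeasureTheory BigOperators

lemma quad_taylor_bound (C C' C'' : ℝ → ℝ) (b : ℝ)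
    (hC' : ∀ x, HasDerivAt C (C' x) x)
    (hC'' : ∀ x, HasDerivAt C' (C'' x) x)
    (hCb : ∀ x, C'' x ≤ b) (x y : ℝ) :
    C y ≤ C x + C' x * (y - x) + b / 2 * (y - x) ^ 2 := by
  set ψ : ℝ → ℝ := fun t => C x + C' x * (t - x) + b / 2 * (t - x) ^ 2 - C t with hψdef
  set φ : ℝ → ℝ := fun t => C' x + b * (t - x) - C' t with hφdef
  have hdψ : ∀ t, HasDerivAt ψ (φ t) t := by
    intro t
    have hid : HasDerivAt (fun t : ℝ => t - x) 1 t := (hasDerivAt_id t).sub_const x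
    have h2 : HasDerivAt (fun t : ℝ => (t - x) ^ 2) (2 * (t - x)) t := by
      simpa using hid.fun_pow 2
    have := (((hid.const_mul (C' x)).const_add (C x)).add (h2.const_mul (b / 2))).sub (hC' t)
    convert this using 1
    all_goals first | rfl | ring
  have hdφ : ∀ t, HasDerivAt φ (b - C'' t) t := by
    intro t
    have hid : HasDerivAt (fun t : ℝ => t - x) 1 t := (hasDerivAt_id t).sub_const x
    have := ((hid.const_mul b).const_add (C' x)).sub (hC'' t)
    convert this using 1
    all_goals first | rfl | ring
  have hφmono : Monotone φ :=
    monotone_of_deriv_nonneg (fun t => (hdφ t).differentiableAt)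
      (fun t => by rw [(hdφ t).deriv]; linarith [hCb t])
  have hφx : φ x = 0 := by simp [hφdef]
  have hψx : ψ x = 0 := by simp [hψdef]
  have hψcont : Continuous ψ :=
    (Differentiable.continuous fun t => (hdψ t).differentiableAt)
  have key : 0 ≤ ψ y := by
    rcases le_total x y with h | h
    · have hmono : MonotoneOn ψ (Set.Ici x) := by
        apply monotoneOn_of_deriv_nonneg (convex_Ici x) hψcont.continuousOn
          (fun t _ => ((hdψ t).differentiableAt).differentiableWithinAt)
        intro t ht
        rw [interior_Ici] at ht
        rw [(hdψ t).deriv, ← hφx]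
        exact hφmono (le_of_lt ht)
      have := hmono (Set.self_mem_Ici) (Set.mem_Ici.mpr h) h
      linarith [hψx ▸ this]
    · have hanti : AntitoneOn ψ (Set.Iic x) := by
        apply antitoneOn_of_deriv_nonpos (convex_Iic x) hψcont.continuousOn
          (fun t _ => ((hdψ t).differentiableAt).differentiableWithinAt)
        intro t ht
        rw [interior_Iic] at ht
        rw [(hdψ t).deriv, ← hφx]
        exact hφmono (le_of_lt ht)
      have := hanti (Set.mem_Iic.mpr h) (Set.self_mem_Iic) h
      linarith [hψx ▸ this]
  simp only [hψdef] at key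
  linarith


set_option maxHeartbeats 1000000 in
/-- Main querier discretization error theorem: the optimal expected cost with
estimates restricted to the grid `F = {f 0 < f 1 < ⋯ < f N}` exceeds the
unrestricted optimum by at most `max_j (b/8)(f_{j+1} - f_j)² + ∫ M dp`. -/
theorem querier_discretization_error
    (C C' C'' : ℝ → ℝ) (b : ℝ) (hb : 0 < b)
    (hC' : ∀ x, HasDerivAt C (C' x) x)
    (hC'' : ∀ x, HasDerivAt C' (C'' x) x)
    (hCb : ∀ x, C'' x ≤ b)
    (hCpos : ∀ x, 0 ≤ C x) (hC0 : C 0 = 0)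
    (hanti : AntitoneOn C (Set.Iic 0)) (hmono : MonotoneOn C (Set.Ici 0))
    (N : ℕ) (f : Fin (N + 1) → ℝ) (hf : StrictMono f)
    (M : ℝ → ℝ)
    (hM : ∀ ω, M ω = if ω ≤ f 0 then C (ω - f 0)
      else if f (Fin.last N) ≤ ω then C (ω - f (Fin.last N)) else 0)
    (p : Measure ℝ) [IsProbabilityMeasure p] (hMint : Integrable M p)
    {A : Type*} [Fintype A] [Nonempty A]
    (𝒬 : Set (A → ℝ → ℝ)) (h𝒬ne : 𝒬.Nonempty)
    (h𝒬 : ∀ q ∈ 𝒬, ∀ a, Measurable (q a) ∧ (∀ ω, 0 ≤ q a ω) ∧ ∀ ω, ∑ b', q b' ω = 1)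
    (cost : (A → ℝ → ℝ) → (A → ℝ) → ℝ)
    (hcost : ∀ q g, cost q g = ∑ a, ∫ ω, C (ω - g a) * q a ω ∂p)
    (hint : ∀ q ∈ 𝒬, ∀ a, ∀ g : ℝ, Integrable (fun ω => C (ω - g) * q a ω) p) :
    (⨅ q : 𝒬, ⨅ g : {g : A → ℝ // ∀ a, g a ∈ Set.range f}, cost q.1 g.1) -
        (⨅ q : 𝒬, ⨅ g : A → ℝ, cost q.1 g) ≤
      (⨆ j : Fin N, b / 8 * (f j.succ - f j.castSucc) ^ 2) + ∫ ω, M ω ∂p := by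
  have hK0 : 0 ≤ ⨆ j : Fin N, b / 8 * (f j.succ - f j.castSucc) ^ 2 :=
    Real.iSup_nonneg fun j => mul_nonneg (by linarith) (sq_nonneg _)
  set K := ⨆ j : Fin N, b / 8 * (f j.succ - f j.castSucc) ^ 2 with hKdef
  have hMpos : ∀ ω, 0 ≤ M ω := by
    intro ω; rw [hM]
    split_ifs with h1 h2
    · exact hCpos _
    · exact hCpos _
    · exact le_rfl
  have hMI0 : 0 ≤ ∫ ω, M ω ∂p := integral_nonneg hMpos
  set E := K + ∫ ω, M ω ∂p with hEdef
  -- basic facts about q ∈ 𝒬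
  have hq1 : ∀ q ∈ 𝒬, ∀ a, ∀ ω, q a ω ≤ 1 := by
    intro q hq a ω
    have hsum := (h𝒬 q hq a).2.2 ω
    calc q a ω ≤ ∑ b', q b' ω :=
          Finset.single_le_sum (fun i _ => (h𝒬 q hq i).2.1 ω) (Finset.mem_univ a)
      _ = 1 := hsum
  have hqnorm : ∀ q ∈ 𝒬, ∀ a, ∀ ω, ‖q a ω‖ ≤ 1 := by
    intro q hq a ω
    rw [Real.norm_eq_abs, abs_of_nonneg ((h𝒬 q hq a).2.1 ω)]
    exact hq1 q hq a ω
  have hqint : ∀ q ∈ 𝒬, ∀ a, Integrable (q a) p := by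
    intro q hq a
    refine Integrable.mono' (integrable_const 1) (h𝒬 q hq a).1.aestronglyMeasurable ?_
    filter_upwards with ω
    exact hqnorm q hq a ω
  have hMqint : ∀ q ∈ 𝒬, ∀ a, Integrable (fun ω => M ω * q a ω) p := by
    intro q hq a
    have := hMint.bdd_mul (c := 1) (h𝒬 q hq a).1.aestronglyMeasurable (ae_of_all _ (hqnorm q hq a))
    simpa [mul_comm] using this
  -- per-coordinate grid replacement
  have peraux : ∀ q ∈ 𝒬, ∀ a : A, ∀ x : ℝ, ∃ y ∈ Set.range f,
      ∫ ω, C (ω - y) * q a ω ∂p ≤ (∫ ω, C (ω - x) * q a ω ∂p)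
        + K * ∫ ω, q a ω ∂p + ∫ ω, M ω * q a ω ∂p := by
    intro q hq a x
    have hqpos := (h𝒬 q hq a).2.1
    have hQ0 : 0 ≤ ∫ ω, q a ω ∂p := integral_nonneg hqpos
    have hMQ0 : 0 ≤ ∫ ω, M ω * q a ω ∂p :=
      integral_nonneg fun ω => mul_nonneg (hMpos ω) (hqpos ω)
    have hsplit : ∫ ω, (C (ω - x) + M ω) * q a ω ∂p
        = (∫ ω, C (ω - x) * q a ω ∂p) + ∫ ω, M ω * q a ω ∂p := by
      rw [show (fun ω => (C (ω - x) + M ω) * q a ω)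
          = fun ω => C (ω - x) * q a ω + M ω * q a ω from by ext ω; ring]
      exact integral_add (hint q hq a x) (hMqint q hq a)
    have hintsum : Integrable (fun ω => (C (ω - x) + M ω) * q a ω) p := by
      rw [show (fun ω => (C (ω - x) + M ω) * q a ω)
          = fun ω => C (ω - x) * q a ω + M ω * q a ω from by ext ω; ring]
      exact (hint q hq a x).add (hMqint q hq a)
    rcases le_or_gt x (f 0) with hx0 | hx0
    · -- clip to f 0
      refine ⟨f 0, ⟨0, rfl⟩, ?_⟩
      have hpt : ∀ ω, C (ω - f 0) * q a ω ≤ (C (ω - x) + M ω) * q a ω := by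
        intro ω
        apply mul_le_mul_of_nonneg_right _ (hqpos ω)
        rcases le_or_gt ω (f 0) with h | h
        · rw [hM ω, if_pos h]; linarith [hCpos (ω - x)]
        · have h1 : (0:ℝ) ≤ ω - f 0 := by linarith
          have h2 : ω - f 0 ≤ ω - x := by linarith
          have := hmono (Set.mem_Ici.mpr h1) (Set.mem_Ici.mpr (le_trans h1 h2)) h2
          linarith [hMpos ω]
      have hI : ∫ ω, C (ω - f 0) * q a ω ∂p ≤ ∫ ω, (C (ω - x) + M ω) * q a ω ∂p :=
        integral_mono (hint q hq a (f 0)) hintsum hpt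
      rw [hsplit] at hI
      nlinarith [mul_nonneg hK0 hQ0]
    rcases le_or_gt (f (Fin.last N)) x with hxN | hxN
    · -- clip to f last
      refine ⟨f (Fin.last N), ⟨Fin.last N, rfl⟩, ?_⟩
      have hpt : ∀ ω, C (ω - f (Fin.last N)) * q a ω ≤ (C (ω - x) + M ω) * q a ω := by
        intro ω
        apply mul_le_mul_of_nonneg_right _ (hqpos ω)
        rcases le_or_gt (f (Fin.last N)) ω with h | h
        · have hMω : C (ω - f (Fin.last N)) ≤ M ω := by
            rcases le_or_gt ω (f 0) with h' | h'
            · have heq : f 0 = f (Fin.last N) :=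
                le_antisymm (hf.monotone (Fin.zero_le _)) (le_trans h h')
              rw [hM ω, if_pos h', heq]
            · rw [hM ω, if_neg (not_le.mpr h'), if_pos h]
          linarith [hCpos (ω - x)]
        · have h1 : ω - f (Fin.last N) ≤ 0 := by linarith
          have h2 : ω - x ≤ ω - f (Fin.last N) := by linarith
          have := hanti (Set.mem_Iic.mpr (le_trans h2 h1)) (Set.mem_Iic.mpr h1) h2
          linarith [hMpos ω]
      have hI : ∫ ω, C (ω - f (Fin.last N)) * q a ω ∂p
          ≤ ∫ ω, (C (ω - x) + M ω) * q a ω ∂p :=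
        integral_mono (hint q hq a _) hintsum hpt
      rw [hsplit] at hI
      nlinarith [mul_nonneg hK0 hQ0]
    · -- interior: find j with f j.castSucc ≤ x ≤ f j.succ
      obtain ⟨j, hju, hjv⟩ : ∃ j : Fin N, f j.castSucc ≤ x ∧ x ≤ f j.succ := by
        classical
        set S : Finset (Fin (N + 1)) := Finset.univ.filter (fun i => f i ≤ x) with hS
        have hSne : S.Nonempty := ⟨0, by simp [hS, hx0.le]⟩
        set i0 := S.max' hSne with hi0def
        have hi0mem : i0 ∈ S := S.max'_mem hSne
        have hi0 : f i0 ≤ x := by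
          have := Finset.mem_filter.mp hi0mem
          exact this.2
        have hi0N : (i0 : ℕ) < N := by
          by_contra hcon
          push_neg at hcon
          have : i0 = Fin.last N := by
            apply Fin.ext
            have := i0.isLt
            simp only [Fin.last]
            omega
          rw [this] at hi0
          linarith
        refine ⟨⟨i0, hi0N⟩, ?_, ?_⟩
        · have : (⟨(i0 : ℕ), hi0N⟩ : Fin N).castSucc = i0 := by
            apply Fin.ext; simp
          rw [this]; exact hi0
        · by_contra hcon
          push_neg at hcon
          have hmem : (⟨(i0 : ℕ), hi0N⟩ : Fin N).succ ∈ S :=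
            Finset.mem_filter.mpr ⟨Finset.mem_univ _, hcon.le⟩
          have hle := S.le_max' _ hmem
          rw [← hi0def] at hle
          have : ((⟨(i0 : ℕ), hi0N⟩ : Fin N).succ : ℕ) = (i0 : ℕ) + 1 := rfl
          rw [Fin.le_def] at hle
          omega
      set u := f j.castSucc with hu
      set v := f j.succ with hv
      have hΔ : 0 < v - u := by
        have := hf (Fin.castSucc_lt_succ (i := j))
        rw [← hu, ← hv] at this
        linarith
      set c := b / 8 * (v - u) ^ 2 with hc
      -- pointwise bound (multiplied through by (v - u) > 0)
      have hpt : ∀ ω, (v - x) * C (ω - u) + (x - u) * C (ω - v)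
          ≤ (v - u) * (C (ω - x) + c) := by
        intro ω
        have T1 := quad_taylor_bound C C' C'' b hC' hC'' hCb (ω - x) (ω - u)
        have T2 := quad_taylor_bound C C' C'' b hC' hC'' hCb (ω - x) (ω - v)
        have e1 : (ω - u) - (ω - x) = x - u := by ring
        have e2 : (ω - v) - (ω - x) = x - v := by ring
        rw [e1] at T1; rw [e2] at T2
        have hvx : (0:ℝ) ≤ v - x := by linarith
        have hxu : (0:ℝ) ≤ x - u := by linarith
        have hT1 := mul_le_mul_of_nonneg_left T1 hvx
        have hT2 := mul_le_mul_of_nonneg_left T2 hxu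
        have hsq : 0 ≤ b * ((v - u) * ((v - x) - (x - u)) ^ 2) :=
          mul_nonneg hb.le (mul_nonneg hΔ.le (sq_nonneg _))
        rw [hc]
        nlinarith [hT1, hT2, hsq]
      -- integral versions
      have hIu := hint q hq a u
      have hIv := hint q hq a v
      have hIx := hint q hq a x
      have hQint := hqint q hq a
      set Iu := ∫ ω, C (ω - u) * q a ω ∂p with hIudef
      set Iv := ∫ ω, C (ω - v) * q a ω ∂p with hIvdef
      set Ix := ∫ ω, C (ω - x) * q a ω ∂p with hIxdef
      set Q := ∫ ω, q a ω ∂p with hQdef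
      have hcomb : (v - x) * Iu + (x - u) * Iv ≤ (v - u) * (Ix + c * Q) := by
        have lhs_eq : (v - x) * Iu + (x - u) * Iv
            = ∫ ω, ((v - x) * (C (ω - u) * q a ω) + (x - u) * (C (ω - v) * q a ω)) ∂p := by
          rw [integral_add (hIu.const_mul _) (hIv.const_mul _),
            integral_const_mul, integral_const_mul]
        have rhs_eq : (v - u) * (Ix + c * Q)
            = ∫ ω, ((v - u) * (C (ω - x) * q a ω) + ((v - u) * c) * q a ω) ∂p := by
          rw [integral_add (hIx.const_mul _) (hQint.const_mul _),
            integral_const_mul, integral_const_mul]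
          ring
        rw [lhs_eq, rhs_eq]
        apply integral_mono ((hIu.const_mul _).add (hIv.const_mul _))
          ((hIx.const_mul _).add (hQint.const_mul _))
        intro ω
        have h1 := mul_le_mul_of_nonneg_right (hpt ω) (hqpos ω)
        simp only [Pi.add_apply]
        nlinarith [h1]
      have hKj : c ≤ K := by
        rw [hKdef, hc, hu, hv]
        exact le_ciSup (f := fun j : Fin N => b / 8 * (f j.succ - f j.castSucc) ^ 2)
          (Set.Finite.bddAbove (Set.finite_range _)) j
      have hvx : (0:ℝ) ≤ v - x := by linarith
      have hxu : (0:ℝ) ≤ x - u := by linarith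
      have hKQ : c * Q ≤ K * Q := mul_le_mul_of_nonneg_right hKj hQ0
      rcases le_total Iu Iv with h | h
      · refine ⟨u, ⟨j.castSucc, hu.symm⟩, ?_⟩
        rw [← hIudef]
        have hIuc : Iu ≤ Ix + c * Q := by
          nlinarith [mul_nonneg hxu (sub_nonneg.mpr h), hcomb, hΔ]
        linarith
      · refine ⟨v, ⟨j.succ, hv.symm⟩, ?_⟩
        rw [← hIvdef]
        have hIvc : Iv ≤ Ix + c * Q := by
          nlinarith [mul_nonneg hvx (sub_nonneg.mpr h), hcomb, hΔ]
        linarith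
  -- combine over coordinates
  have key : ∀ q ∈ 𝒬, ∀ g : A → ℝ, ∃ g' : A → ℝ, (∀ a, g' a ∈ Set.range f) ∧
      cost q g' ≤ cost q g + E := by
    intro q hq g
    choose g' hg'mem hg'le using fun a => peraux q hq a (g a)
    refine ⟨g', hg'mem, ?_⟩
    rw [hcost, hcost]
    have hptsum : ∀ ω, ∑ a, q a ω = 1 := by
      intro ω
      exact (h𝒬 q hq (Classical.arbitrary A)).2.2 ω
    have hsum1 : ∑ a, ∫ ω, q a ω ∂p = 1 := by
      rw [← integral_finset_sum _ (fun a _ => hqint q hq a)]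
      have : ∫ ω, ∑ a, q a ω ∂p = ∫ (_ : ℝ), (1:ℝ) ∂p := by
        apply integral_congr_ae
        filter_upwards with ω
        exact hptsum ω
      rw [this]
      simp
    have hsum2 : ∑ a, ∫ ω, M ω * q a ω ∂p = ∫ ω, M ω ∂p := by
      rw [← integral_finset_sum _ (fun a _ => hMqint q hq a)]
      apply integral_congr_ae
      filter_upwards with ω
      rw [← Finset.mul_sum, hptsum ω, mul_one]
    calc ∑ a, ∫ ω, C (ω - g' a) * q a ω ∂p
        ≤ ∑ a, ((∫ ω, C (ω - g a) * q a ω ∂p)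
            + K * ∫ ω, q a ω ∂p + ∫ ω, M ω * q a ω ∂p) :=
          Finset.sum_le_sum fun a _ => hg'le a
      _ = (∑ a, ∫ ω, C (ω - g a) * q a ω ∂p) + K * (∑ a, ∫ ω, q a ω ∂p)
            + ∑ a, ∫ ω, M ω * q a ω ∂p := by
          rw [Finset.sum_add_distrib, Finset.sum_add_distrib, Finset.mul_sum]
      _ = (∑ a, ∫ ω, C (ω - g a) * q a ω ∂p) + E := by
          rw [hsum1, hsum2, hEdef]; ring
  -- infimum manipulation
  have hcost0 : ∀ q ∈ 𝒬, ∀ g : A → ℝ, 0 ≤ cost q g := by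
    intro q hq g
    rw [hcost]
    exact Finset.sum_nonneg fun a _ => integral_nonneg fun ω =>
      mul_nonneg (hCpos _) ((h𝒬 q hq a).2.1 ω)
  have h𝒬ne' : Nonempty 𝒬 := h𝒬ne.to_subtype
  have hGne : Nonempty {g : A → ℝ // ∀ a, g a ∈ Set.range f} :=
    ⟨⟨fun _ => f 0, fun _ => ⟨0, rfl⟩⟩⟩
  set IF := ⨅ q : 𝒬, ⨅ g : {g : A → ℝ // ∀ a, g a ∈ Set.range f}, cost q.1 g.1 with hIF
  set I := ⨅ q : 𝒬, ⨅ g : A → ℝ, cost q.1 g with hI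
  have h1 : ∀ (q : 𝒬) (g : A → ℝ), IF - E ≤ cost q.1 g := by
    intro q g
    obtain ⟨g', hmem, hle⟩ := key q.1 q.2 g
    have step1 : IF ≤ ⨅ g'' : {g : A → ℝ // ∀ a, g a ∈ Set.range f}, cost q.1 g''.1 := by
      apply ciInf_le _ q
      refine ⟨0, ?_⟩
      rintro _ ⟨q', rfl⟩
      exact le_ciInf fun g'' => hcost0 q'.1 q'.2 g''.1
    have step2 : (⨅ g'' : {g : A → ℝ // ∀ a, g a ∈ Set.range f}, cost q.1 g''.1)
        ≤ cost q.1 g' :=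
      ciInf_le (f := fun g'' : {g : A → ℝ // ∀ a, g a ∈ Set.range f} => cost q.1 g''.1) ⟨0, by rintro _ ⟨g'', rfl⟩; exact hcost0 q.1 q.2 g''.1⟩ ⟨g', hmem⟩
    linarith
  have h2 : IF - E ≤ I := le_ciInf fun q => le_ciInf fun g => h1 q g
  linarith
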